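/- Weighted Poincaré inequality on ℤ with exponential weight: there is a constant c > 0 such that for every f : ℤ → ℝ, Σ_{k∈ℤ} (f(k) − ⟨f⟩)² e^{−|k|} ≤ c · Σ_{n∈ℤ} (f(n+1) − f(n))² e^{−|n|}, where ⟨f⟩ = (Σ_k f(k) e^{−|k|}) / (Σ_k e^{−|k|}). -/

import Mathlib

open Real
open scoped ENNReal


lemma exp_half_ge : (3:ℝ)/2 ≤ Real.exp (1/2) := by
  have := Real.add_one_le_exp (1/2 : ℝ); linarith

lemma geom_bound (k : ℕ) : ∑ j ∈ Finset.range k, Real.exp ((j:ℝ)/2) ≤ 2 * Real.exp ((k:ℝ)/2) := by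
  have hr : (1:ℝ) < Real.exp (1/2) := by linarith [exp_half_ge]
  have h1 : ∀ j : ℕ, Real.exp ((j:ℝ)/2) = Real.exp (1/2) ^ j := by
    intro j; rw [← Real.exp_nat_mul]; ring_nf
  simp_rw [h1]
  rw [geom_sum_eq (ne_of_gt hr)]
  have hk : Real.exp (1/2) ^ k = Real.exp ((k:ℝ)/2) := (h1 k).symm
  have hpos : (0:ℝ) < Real.exp (1/2) - 1 := by linarith
  rw [div_le_iff₀ hpos]
  nlinarith [Real.exp_pos ((k:ℝ)/2), exp_half_ge, hk]

lemma cs_step (u : ℕ → ℝ) (k : ℕ) :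
    (u k - u 0)^2 * Real.exp (-(k:ℝ)) ≤
      ∑ j ∈ Finset.range k, 2 * Real.exp (-((k:ℝ)-j)/2) * ((u (j+1) - u j)^2 * Real.exp (-(j:ℝ))) := by
  have htel : ∑ j ∈ Finset.range k, (u (j+1) - u j) = u k - u 0 := Finset.sum_range_sub u k
  have hcs := Finset.sum_mul_sq_le_sq_mul_sq (Finset.range k)
    (fun j => Real.exp ((j:ℝ)/4)) (fun j => (u (j+1) - u j) * Real.exp (-(j:ℝ)/4))
  have h1 : ∀ j ∈ Finset.range k,
      Real.exp ((j:ℝ)/4) * ((u (j+1) - u j) * Real.exp (-(j:ℝ)/4)) = u (j+1) - u j := by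
    intro j _; rw [mul_comm, mul_assoc, ← Real.exp_add]; ring_nf; simp
  rw [Finset.sum_congr rfl h1, htel] at hcs
  have h2 : ∀ j ∈ Finset.range k, Real.exp ((j:ℝ)/4) ^ 2 = Real.exp ((j:ℝ)/2) := by
    intro j _; rw [← Real.exp_nat_mul]; ring_nf
  have h3 : ∀ j ∈ Finset.range k, ((u (j+1) - u j) * Real.exp (-(j:ℝ)/4)) ^ 2
      = (u (j+1) - u j)^2 * Real.exp (-(j:ℝ)/2) := by
    intro j _; rw [mul_pow, ← Real.exp_nat_mul]; ring_nf
  rw [Finset.sum_congr rfl h2, Finset.sum_congr rfl h3] at hcs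
  have hg := geom_bound k
  have hnn : (0:ℝ) ≤ ∑ j ∈ Finset.range k, (u (j+1) - u j)^2 * Real.exp (-(j:ℝ)/2) :=
    Finset.sum_nonneg fun j _ => mul_nonneg (sq_nonneg _) (Real.exp_pos _).le
  have key : (u k - u 0)^2 ≤ 2 * Real.exp ((k:ℝ)/2) *
      ∑ j ∈ Finset.range k, (u (j+1) - u j)^2 * Real.exp (-(j:ℝ)/2) :=
    hcs.trans (mul_le_mul_of_nonneg_right hg hnn)
  calc (u k - u 0)^2 * Real.exp (-(k:ℝ))
      ≤ (2 * Real.exp ((k:ℝ)/2) *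
          ∑ j ∈ Finset.range k, (u (j+1) - u j)^2 * Real.exp (-(j:ℝ)/2)) * Real.exp (-(k:ℝ)) :=
        mul_le_mul_of_nonneg_right key (Real.exp_pos _).le
    _ = ∑ j ∈ Finset.range k, 2 * Real.exp (-((k:ℝ)-j)/2) * ((u (j+1) - u j)^2 * Real.exp (-(j:ℝ))) := by
        rw [mul_comm, ← mul_assoc, Finset.mul_sum]
        refine Finset.sum_congr rfl fun j _ => ?_
        have e1 : rexp (-((k:ℝ)-j)/2) * rexp (-(j:ℝ))
            = rexp (-(k:ℝ)) * rexp ((k:ℝ)/2) * rexp (-(j:ℝ)/2) := by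
          rw [← Real.exp_add, ← Real.exp_add, ← Real.exp_add]; ring_nf
        linear_combination (-(2 * (u (j+1) - u j)^2)) * e1

open ENNReal in
lemma geom_tail_bound : ∑' i : ℕ, (2 : ℝ) * Real.exp (-((i:ℝ)+1)/2) ≤ 4 := by
  set r := Real.exp (-(1/2) : ℝ) with hrdef
  have hr0 : (0:ℝ) ≤ r := (Real.exp_pos _).le
  have hr1 : r < 1 := Real.exp_lt_one_iff.mpr (by norm_num)
  have hterm : ∀ i : ℕ, (2 : ℝ) * Real.exp (-((i:ℝ)+1)/2) = (2*r) * r ^ i := by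
    intro i
    have : r ^ i = Real.exp ((i:ℝ) * (-(1/2))) := by rw [hrdef, ← Real.exp_nat_mul]
    rw [this, hrdef, mul_assoc, ← Real.exp_add]
    ring_nf
  simp_rw [hterm]
  rw [tsum_mul_left, tsum_geometric_of_lt_one hr0 hr1]
  have hr23 : r ≤ 2/3 := by
    rw [hrdef, Real.exp_neg]
    rw [inv_le_comm₀ (Real.exp_pos _) (by norm_num)]
    calc (2/3 : ℝ)⁻¹ = 3/2 := by norm_num
      _ ≤ Real.exp (1/2) := exp_half_ge
  have h13 : (1:ℝ)/3 ≤ 1 - r := by linarith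
  rw [mul_comm]
  have : (1-r)⁻¹ ≤ 3 := by
    rw [inv_le_comm₀ (by linarith) (by norm_num)]
    linarith
  nlinarith

open ENNReal in
noncomputable def Wgt (k j : ℕ) : ℝ≥0∞ :=
  if j < k then ENNReal.ofReal (2 * Real.exp (-((k:ℝ)-j)/2)) else 0

open ENNReal in
noncomputable def Bv (u : ℕ → ℝ) (j : ℕ) : ℝ≥0∞ :=
  ENNReal.ofReal ((u (j+1) - u j)^2 * Real.exp (-(j:ℝ)))

open ENNReal in
lemma hW_bound (j : ℕ) : ∑' k, Wgt k j ≤ ENNReal.ofReal 4 := by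
  have hinj : Function.Injective (fun n : ℕ => n + (j+1)) := fun a b h => by simpa using h
  have hsupp : Function.support (fun k => Wgt k j) ⊆ Set.range (fun n : ℕ => n + (j+1)) := by
    intro k hk
    have hjk : j < k := by
      by_contra h
      exact hk (by simp [Wgt, h])
    exact ⟨k - (j+1), by simp; omega⟩
  have hsplit : ∑' i : ℕ, Wgt (i+(j+1)) j = ∑' k : ℕ, Wgt k j :=
    Function.Injective.tsum_eq hinj hsupp
  rw [← hsplit]
  have he : ∀ i : ℕ, Wgt (i + (j+1)) j = ENNReal.ofReal (2 * Real.exp (-((i:ℝ)+1)/2)) := by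
    intro i
    have h1 : j < i + (j+1) := by omega
    simp only [Wgt, if_pos h1]
    congr 2
    push_cast; ring
  simp_rw [he]
  rw [← ENNReal.ofReal_tsum_of_nonneg (fun i => by positivity)]
  · exact ENNReal.ofReal_le_ofReal geom_tail_bound
  · have hr0 : (0:ℝ) ≤ Real.exp (-(1/2):ℝ) := (Real.exp_pos _).le
    have hr1 : Real.exp (-(1/2):ℝ) < 1 := Real.exp_lt_one_iff.mpr (by norm_num)
    have hterm : ∀ i : ℕ, (2 : ℝ) * Real.exp (-((i:ℝ)+1)/2)
        = (2*Real.exp (-(1/2):ℝ)) * Real.exp (-(1/2):ℝ) ^ i := by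
      intro i
      have : Real.exp (-(1/2):ℝ) ^ i = Real.exp ((i:ℝ) * (-(1/2))) := by
        rw [← Real.exp_nat_mul]
      rw [this, mul_assoc, ← Real.exp_add]
      ring_nf
    simp_rw [hterm]
    exact (summable_geometric_of_lt_one hr0 hr1).mul_left _

open ENNReal in
lemma key_nat (u : ℕ → ℝ) :
    ∑' k : ℕ, ENNReal.ofReal ((u k - u 0)^2 * Real.exp (-(k:ℝ))) ≤
      ENNReal.ofReal 4 * ∑' j : ℕ, Bv u j := by
  have step1 : ∀ k, ENNReal.ofReal ((u k - u 0)^2 * Real.exp (-(k:ℝ))) ≤ ∑' j, Wgt k j * Bv u j := by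
    intro k
    calc ENNReal.ofReal ((u k - u 0)^2 * Real.exp (-(k:ℝ)))
        ≤ ENNReal.ofReal (∑ j ∈ Finset.range k,
            2 * Real.exp (-((k:ℝ)-j)/2) * ((u (j+1) - u j)^2 * Real.exp (-(j:ℝ)))) :=
          ENNReal.ofReal_le_ofReal (cs_step u k)
      _ = ∑ j ∈ Finset.range k, ENNReal.ofReal (2 * Real.exp (-((k:ℝ)-j)/2)) * Bv u j := by
          rw [ENNReal.ofReal_sum_of_nonneg (fun i _ => by positivity)]
          exact Finset.sum_congr rfl fun j _ => ENNReal.ofReal_mul (by positivity)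
      _ = ∑' j, Wgt k j * Bv u j := by
          rw [tsum_eq_sum (s := Finset.range k)
            (fun j hj => by simp [Wgt, Finset.mem_range.not.mp hj])]
          exact (Finset.sum_congr rfl fun j hj => by simp [Wgt, Finset.mem_range.mp hj]).symm
  calc ∑' k : ℕ, ENNReal.ofReal ((u k - u 0)^2 * Real.exp (-(k:ℝ)))
      ≤ ∑' k, ∑' j, Wgt k j * Bv u j := ENNReal.tsum_le_tsum step1
    _ = ∑' j, ∑' k, Wgt k j * Bv u j := ENNReal.tsum_comm
    _ = ∑' j, (∑' k, Wgt k j) * Bv u j := by simp_rw [ENNReal.tsum_mul_right]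
    _ ≤ ∑' j, ENNReal.ofReal 4 * Bv u j :=
        ENNReal.tsum_le_tsum fun j => mul_le_mul_left (hW_bound j) _
    _ = ENNReal.ofReal 4 * ∑' j, Bv u j := ENNReal.tsum_mul_left


lemma tsum_cs (u g : ℤ → ℝ) (hg0 : ∀ k, 0 ≤ g k)
    (hu : Summable (fun k => |u k| * g k)) (hv : Summable (fun k => u k ^ 2 * g k))
    (hgs : Summable g) :
    (∑' k, |u k| * g k) ^ 2 ≤ (∑' k, u k ^ 2 * g k) * (∑' k, g k) := by
  set P : ℝ := (∑' k, u k ^ 2 * g k) * (∑' k, g k) with hP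
  have hP0 : 0 ≤ P :=
    mul_nonneg (tsum_nonneg fun k => mul_nonneg (sq_nonneg _) (hg0 k))
      (tsum_nonneg fun k => hg0 k)
  have hs : ∀ s : Finset ℤ, ∑ k ∈ s, |u k| * g k ≤ Real.sqrt P := by
    intro s
    have cs := Finset.sum_mul_sq_le_sq_mul_sq s (fun k => |u k| * Real.sqrt (g k))
      (fun k => Real.sqrt (g k))
    have e1 : ∀ k ∈ s, |u k| * Real.sqrt (g k) * Real.sqrt (g k) = |u k| * g k := by
      intro k _; rw [mul_assoc, Real.mul_self_sqrt (hg0 k)]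
    have e2 : ∀ k ∈ s, (|u k| * Real.sqrt (g k)) ^ 2 = u k ^ 2 * g k := by
      intro k _; rw [mul_pow, sq_abs, Real.sq_sqrt (hg0 k)]
    have e3 : ∀ k ∈ s, Real.sqrt (g k) ^ 2 = g k := by
      intro k _; rw [Real.sq_sqrt (hg0 k)]
    rw [Finset.sum_congr rfl e1, Finset.sum_congr rfl e2, Finset.sum_congr rfl e3] at cs
    have h1 : ∑ k ∈ s, u k ^ 2 * g k ≤ ∑' k, u k ^ 2 * g k :=
      Summable.sum_le_tsum s (fun k _ => mul_nonneg (sq_nonneg _) (hg0 k)) hv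
    have h2 : ∑ k ∈ s, g k ≤ ∑' k, g k :=
      Summable.sum_le_tsum s (fun k _ => hg0 k) hgs
    have hsq : (∑ k ∈ s, |u k| * g k) ^ 2 ≤ P := by
      refine cs.trans ?_
      exact mul_le_mul h1 h2 (Finset.sum_nonneg fun k _ => hg0 k)
        (tsum_nonneg fun k => mul_nonneg (sq_nonneg _) (hg0 k))
    exact Real.le_sqrt_of_sq_le hsq
  have h3 : ∑' k, |u k| * g k ≤ Real.sqrt P := Summable.tsum_le_of_sum_le hu hs
  calc (∑' k, |u k| * g k) ^ 2 ≤ Real.sqrt P ^ 2 :=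
        pow_le_pow_left₀ (tsum_nonneg fun k => mul_nonneg (abs_nonneg _) (hg0 k)) h3 2
    _ = P := Real.sq_sqrt hP0

lemma gw_summable : Summable (fun k : ℤ => Real.exp (-|(k : ℝ)|)) := by
  apply Summable.of_nat_of_neg_add_one
  · refine Real.summable_exp_neg_nat.congr fun n => ?_
    simp [abs_of_nonneg]
  · have h : Summable (fun n : ℕ => Real.exp (-((n:ℝ) + 1))) := by
      have := (summable_nat_add_iff (f := fun n : ℕ => Real.exp (-(n:ℝ))) 1).mpr
        Real.summable_exp_neg_nat
      refine this.congr fun n => ?_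
      push_cast; ring_nf
    refine h.congr fun n => ?_
    congr 1
    push_cast
    rw [abs_of_nonpos (by linarith [Nat.cast_nonneg (α := ℝ) n])]
    ring


lemma int_split (h : ℤ → ℝ≥0∞) :
    ∑' k : ℤ, h k = ∑' n : ℕ, h n + ∑' n : ℕ, h (-(n+1)) :=
  tsum_of_nat_of_neg_add_one ENNReal.summable ENNReal.summable

lemma main_aux (f : ℤ → ℝ) (hf : Summable (fun k : ℤ => f k * Real.exp (-|(k : ℝ)|))) :
    (∑' k : ℤ,
        ENNReal.ofReal
          ((f k - (∑' j : ℤ, f j * Real.exp (-|(j : ℝ)|)) /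
              (∑' j : ℤ, Real.exp (-|(j : ℝ)|))) ^ 2 * Real.exp (-|(k : ℝ)|)))
      ≤ ENNReal.ofReal 48 *
          ∑' n : ℤ, ENNReal.ofReal ((f (n + 1) - f n) ^ 2 * Real.exp (-|(n : ℝ)|)) := by
  have hgs := gw_summable
  set G : ℝ := ∑' j : ℤ, Real.exp (-|(j : ℝ)|) with hGdef
  set S : ℝ := ∑' j : ℤ, f j * Real.exp (-|(j : ℝ)|) with hSdef
  set m : ℝ := S / G with hmdef
  set D : ℝ≥0∞ := ∑' n : ℤ, ENNReal.ofReal ((f (n + 1) - f n) ^ 2 * Real.exp (-|(n : ℝ)|))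
    with hDdef
  set T : ℝ≥0∞ := ∑' k : ℤ, ENNReal.ofReal ((f k - f 0) ^ 2 * Real.exp (-|(k : ℝ)|)) with hTdef
  have hG1 : 1 ≤ G := by
    have h0 : Real.exp (-|((0:ℤ) : ℝ)|) ≤ G := Summable.le_tsum hgs 0 (fun j _ => (Real.exp_pos _).le)
    simpa using h0
  have hGpos : (0:ℝ) < G := by linarith
  -- Step A : T ≤ ofReal 11 * D
  have hD_split : D = (∑' n : ℕ, Bv (fun i : ℕ => f i) n) +
      ∑' n : ℕ, ENNReal.ofReal ((f (-(n+1) + 1) - f (-(n+1))) ^ 2 * Real.exp (-((n:ℝ)+1))) := by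
    rw [hDdef, int_split]
    congr 1
    · refine tsum_congr fun n => ?_
      simp only [Bv]
      push_cast
      rw [abs_of_nonneg (by positivity : (0:ℝ) ≤ (n:ℝ))]
    · refine tsum_congr fun n => ?_
      congr 2
      congr 1
      push_cast
      rw [abs_neg, abs_of_nonneg (by positivity : (0:ℝ) ≤ (n:ℝ)+1)]
  have hTpos_bound : (∑' n : ℕ, ENNReal.ofReal ((f n - f 0) ^ 2 * Real.exp (-|((n:ℕ):ℝ)|)))
      ≤ ENNReal.ofReal 4 * ∑' n : ℕ, Bv (fun i : ℕ => f i) n := by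
    have h := key_nat (fun i : ℕ => f i)
    refine le_trans (le_of_eq (tsum_congr fun n => ?_)) h
    congr 2
    rw [abs_of_nonneg (by positivity : (0:ℝ) ≤ (n:ℝ))]
  have hTneg_bound : (∑' n : ℕ, ENNReal.ofReal ((f (-(n+1)) - f 0) ^ 2
        * Real.exp (-|((-(n+1) : ℤ):ℝ)|)))
      ≤ ENNReal.ofReal 4 * ∑' j : ℕ, Bv (fun i : ℕ => f (-(i:ℤ))) j := by
    calc (∑' n : ℕ, ENNReal.ofReal ((f (-(n+1)) - f 0) ^ 2 * Real.exp (-|((-(n+1) : ℤ):ℝ)|)))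
        = ∑' n : ℕ, ENNReal.ofReal ((f (-(n+1)) - f 0) ^ 2 * Real.exp (-(((n+1):ℕ):ℝ))) := by
          refine tsum_congr fun n => ?_
          congr 1
          congr 1
          congr 1
          push_cast
          rw [abs_neg, abs_of_nonneg (by positivity : (0:ℝ) ≤ (n:ℝ)+1)]
      _ ≤ ∑' k : ℕ, ENNReal.ofReal ((f (-(k:ℤ)) - f 0) ^ 2 * Real.exp (-(k:ℝ))) := by
          refine le_of_eq (Function.Injective.tsum_eq (g := fun n : ℕ => n + 1)
            (f := fun k : ℕ => ENNReal.ofReal ((f (-(k:ℤ)) - f 0) ^ 2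
              * Real.exp (-(k:ℝ)))) (fun a b h => by simpa using h) ?_)
          intro k hk
          rcases k with _ | n
          · exfalso; apply hk; simp
          · exact ⟨n, rfl⟩
      _ ≤ ENNReal.ofReal 4 * ∑' j : ℕ, Bv (fun i : ℕ => f (-(i:ℤ))) j :=
          key_nat (fun i : ℕ => f (-(i:ℤ)))
  have hBv_neg : ∀ j : ℕ, Bv (fun i : ℕ => f (-(i:ℤ))) j
      ≤ ENNReal.ofReal (Real.exp 1) *
        ENNReal.ofReal ((f (-(j+1) + 1) - f (-(j+1))) ^ 2 * Real.exp (-((j:ℝ)+1))) := by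
    intro j
    simp only [Bv]
    rw [← ENNReal.ofReal_mul (Real.exp_pos 1).le]
    apply ENNReal.ofReal_le_ofReal
    apply le_of_eq
    have e2 : (-((j:ℤ)+1) + 1) = -(j:ℤ) := by ring
    have hexp : Real.exp (-(j:ℝ)) = Real.exp 1 * Real.exp (-((j:ℝ)+1)) := by
      rw [← Real.exp_add]; ring_nf
    push_cast
    rw [e2, hexp]
    ring
  have hA : T ≤ ENNReal.ofReal 11 * D := by
    rw [hTdef, int_split, hD_split]
    have h11 : ENNReal.ofReal 4 ≤ ENNReal.ofReal 11 := ENNReal.ofReal_le_ofReal (by norm_num)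
    have hneg2 : (∑' n : ℕ, ENNReal.ofReal ((f (-(n+1)) - f 0) ^ 2
          * Real.exp (-|((-(n+1) : ℤ):ℝ)|)))
        ≤ ENNReal.ofReal 11 *
          ∑' n : ℕ, ENNReal.ofReal ((f (-(n+1) + 1) - f (-(n+1))) ^ 2
            * Real.exp (-((n:ℝ)+1))) := by
      refine hTneg_bound.trans ?_
      calc ENNReal.ofReal 4 * ∑' j : ℕ, Bv (fun i : ℕ => f (-(i:ℤ))) j
          ≤ ENNReal.ofReal 4 * (ENNReal.ofReal (Real.exp 1) *
            ∑' n : ℕ, ENNReal.ofReal ((f (-(n+1) + 1) - f (-(n+1))) ^ 2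
              * Real.exp (-((n:ℝ)+1)))) := by
            apply mul_le_mul_right
            rw [← ENNReal.tsum_mul_left]
            exact ENNReal.tsum_le_tsum hBv_neg
        _ ≤ ENNReal.ofReal 11 * ∑' n : ℕ, ENNReal.ofReal ((f (-(n+1) + 1) - f (-(n+1))) ^ 2
              * Real.exp (-((n:ℝ)+1))) := by
            rw [← mul_assoc, ← ENNReal.ofReal_mul (by norm_num : (0:ℝ) ≤ 4)]
            apply mul_le_mul_left
            apply ENNReal.ofReal_le_ofReal
            have := Real.exp_one_lt_d9
            nlinarith
    have hpos2 : (∑' n : ℕ, ENNReal.ofReal ((f n - f 0) ^ 2 * Real.exp (-|((n:ℕ):ℝ)|)))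
        ≤ ENNReal.ofReal 11 * ∑' n : ℕ, Bv (fun i : ℕ => f i) n :=
      hTpos_bound.trans (mul_le_mul_left h11 _)
    rw [mul_add]
    exact add_le_add hpos2 hneg2
  -- Step B : ofReal ((f 0 - m)^2 * G) ≤ T
  have hB : ENNReal.ofReal ((f 0 - m) ^ 2 * G) ≤ T := by
    by_cases hT : T = ⊤
    · rw [hT]; exact le_top
    · set w : ℤ → ℝ := fun k => (f k - f 0) ^ 2 * Real.exp (-|(k:ℝ)|) with hw
      have hw0 : ∀ k, 0 ≤ w k := fun k => mul_nonneg (sq_nonneg _) (Real.exp_pos _).le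
      have hsumw : Summable w := by
        have h2 : (∑' k, ((w k).toNNReal : ℝ≥0∞)) ≠ ⊤ := hT
        have h3 : Summable (fun k => (w k).toNNReal) :=
          ENNReal.tsum_coe_ne_top_iff_summable.mp h2
        have h4 : Summable (fun k => ((w k).toNNReal : ℝ)) := NNReal.summable_coe.mpr h3
        refine h4.congr fun k => Real.coe_toNNReal _ (hw0 k)
      have hTval : T = ENNReal.ofReal (∑' k, w k) :=
        (ENNReal.ofReal_tsum_of_nonneg hw0 hsumw).symm
      rw [hTval]
      apply ENNReal.ofReal_le_ofReal
      set W : ℝ := ∑' k, w k with hWdef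
      have hsub : Summable (fun k : ℤ => (f k - f 0) * Real.exp (-|(k:ℝ)|)) := by
        have := hf.sub (hgs.mul_left (f 0))
        refine this.congr fun k => ?_
        ring
      have htsub : (∑' k : ℤ, (f k - f 0) * Real.exp (-|(k:ℝ)|)) = S - f 0 * G := by
        have h1 : (∑' k : ℤ, (f k * Real.exp (-|(k:ℝ)|) - f 0 * Real.exp (-|(k:ℝ)|)))
            = S - f 0 * G := by
          rw [Summable.tsum_sub hf (hgs.mul_left (f 0)), tsum_mul_left]
        rw [← h1]
        exact tsum_congr fun k => by ring
      have habs : Summable (fun k : ℤ => |f k - f 0| * Real.exp (-|(k:ℝ)|)) := by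
        refine hsub.abs.congr fun k => ?_
        rw [abs_mul, abs_of_pos (Real.exp_pos _)]
      have hm : |S - f 0 * G| ≤ ∑' k : ℤ, |f k - f 0| * Real.exp (-|(k:ℝ)|) := by
        rw [← htsub]
        have h5 := norm_tsum_le_tsum_norm (f := fun k : ℤ => (f k - f 0) * Real.exp (-|(k:ℝ)|))
          (habs.congr fun k => by rw [Real.norm_eq_abs, abs_mul, abs_of_pos (Real.exp_pos _)])
        simpa [Real.norm_eq_abs, abs_mul, abs_of_pos (Real.exp_pos _)] using h5
      have hcs := tsum_cs (fun k => f k - f 0) (fun k => Real.exp (-|(k:ℝ)|))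
        (fun k => (Real.exp_pos _).le) habs hsumw hgs
      set A : ℝ := ∑' k : ℤ, |f k - f 0| * Real.exp (-|(k:ℝ)|) with hAdef
      have hA0 : 0 ≤ A := tsum_nonneg fun k => mul_nonneg (abs_nonneg _) (Real.exp_pos _).le
      have hmf : (m - f 0) * G = S - f 0 * G := by
        rw [hmdef]; field_simp
      have h1 : |m - f 0| * G ≤ A := by
        have e : |m - f 0| * G = |S - f 0 * G| := by
          rw [← hmf, abs_mul, abs_of_pos hGpos]
        rw [e]; exact hm
      have h2 : A ^ 2 ≤ W * G := hcs
      have h3 : (m - f 0) ^ 2 * G ^ 2 ≤ W * G := by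
        calc (m - f 0) ^ 2 * G ^ 2 = (|m - f 0| * G) ^ 2 := by rw [mul_pow, sq_abs]
          _ ≤ A ^ 2 := by
              apply pow_le_pow_left₀ (by positivity) h1
          _ ≤ W * G := h2
      have hW0 : 0 ≤ W := tsum_nonneg hw0
      nlinarith [h3, hGpos, sq_nonneg (f 0 - m), sq_nonneg (m - f 0)]
  -- Step C : assemble
  have hgsum_enn : (∑' k : ℤ, ENNReal.ofReal (Real.exp (-|(k:ℝ)|))) = ENNReal.ofReal G :=
    (ENNReal.ofReal_tsum_of_nonneg (fun k => (Real.exp_pos _).le) hgs).symm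
  have hpt : ∀ k : ℤ, ENNReal.ofReal ((f k - m) ^ 2 * Real.exp (-|(k:ℝ)|))
      ≤ ENNReal.ofReal (2 * ((f k - f 0) ^ 2 * Real.exp (-|(k:ℝ)|)))
        + ENNReal.ofReal (2 * (f 0 - m) ^ 2 * Real.exp (-|(k:ℝ)|)) := by
    intro k
    rw [← ENNReal.ofReal_add (by positivity) (by positivity)]
    apply ENNReal.ofReal_le_ofReal
    have hsq : (f k - m) ^ 2 ≤ 2 * (f k - f 0) ^ 2 + 2 * (f 0 - m) ^ 2 := by
      nlinarith [sq_nonneg ((f k - f 0) - (f 0 - m))]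
    nlinarith [Real.exp_pos (-|(k:ℝ)|), mul_le_mul_of_nonneg_right hsq (Real.exp_pos (-|(k:ℝ)|)).le]
  calc (∑' k : ℤ, ENNReal.ofReal ((f k - m) ^ 2 * Real.exp (-|(k:ℝ)|)))
      ≤ ∑' k : ℤ, (ENNReal.ofReal (2 * ((f k - f 0) ^ 2 * Real.exp (-|(k:ℝ)|)))
          + ENNReal.ofReal (2 * (f 0 - m) ^ 2 * Real.exp (-|(k:ℝ)|))) :=
        ENNReal.tsum_le_tsum hpt
    _ = (∑' k : ℤ, ENNReal.ofReal (2 * ((f k - f 0) ^ 2 * Real.exp (-|(k:ℝ)|))))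
          + ∑' k : ℤ, ENNReal.ofReal (2 * (f 0 - m) ^ 2 * Real.exp (-|(k:ℝ)|)) :=
        ENNReal.tsum_add
    _ = ENNReal.ofReal 2 * T + ENNReal.ofReal (2 * (f 0 - m) ^ 2) * ENNReal.ofReal G := by
        congr 1
        · rw [hTdef, ← ENNReal.tsum_mul_left]
          exact tsum_congr fun k => ENNReal.ofReal_mul (by norm_num : (0:ℝ) ≤ 2)
        · rw [← hgsum_enn, ← ENNReal.tsum_mul_left]
          exact tsum_congr fun k =>
            ENNReal.ofReal_mul (by positivity : (0:ℝ) ≤ 2 * (f 0 - m) ^ 2)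
    _ ≤ ENNReal.ofReal 2 * T + ENNReal.ofReal 2 * T := by
        apply add_le_add_right
        have e1 : ENNReal.ofReal (2 * (f 0 - m) ^ 2) * ENNReal.ofReal G
            = ENNReal.ofReal 2 * ENNReal.ofReal ((f 0 - m) ^ 2 * G) := by
          rw [← ENNReal.ofReal_mul (by positivity : (0:ℝ) ≤ 2 * (f 0 - m) ^ 2),
            ← ENNReal.ofReal_mul (by norm_num : (0:ℝ) ≤ 2)]
          congr 1
          ring
        rw [e1]
        exact mul_le_mul_right hB _
    _ = ENNReal.ofReal 4 * T := by
        rw [← add_mul, ← ENNReal.ofReal_add (by norm_num) (by norm_num)]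
        norm_num
    _ ≤ ENNReal.ofReal 4 * (ENNReal.ofReal 11 * D) := mul_le_mul_right hA _
    _ ≤ ENNReal.ofReal 48 * D := by
        rw [← mul_assoc, ← ENNReal.ofReal_mul (by norm_num : (0:ℝ) ≤ 4)]
        exact mul_le_mul_left (ENNReal.ofReal_le_ofReal (by norm_num)) _


/-- Weighted Poincaré inequality on ℤ with exponential weight `g k = exp (-|k|)`. -/
theorem weighted_poincare_int :
    ∃ c : ℝ, 0 < c ∧ ∀ f : ℤ → ℝ,
      Summable (fun k : ℤ => f k * Real.exp (-|(k : ℝ)|)) →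
      (∑' k : ℤ,
          ENNReal.ofReal
            ((f k - (∑' j : ℤ, f j * Real.exp (-|(j : ℝ)|)) /
                (∑' j : ℤ, Real.exp (-|(j : ℝ)|))) ^ 2 * Real.exp (-|(k : ℝ)|)))
        ≤ ENNReal.ofReal c *
            ∑' n : ℤ, ENNReal.ofReal ((f (n + 1) - f n) ^ 2 * Real.exp (-|(n : ℝ)|)) := by
  exact ⟨48, by norm_num, fun f hf => main_aux f hf⟩
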